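/- arXiv:math/0702315 — 4 statements merged into one kernel-verified Lean document; each statement's English description precedes it below -/
import Mathlib

section
/- Let A be a commutative noetherian regular domain of finite Krull dimension and let 1 ≤ p ≤ dim A. If the Grothendieck group K₀(M^p(A)) is generated by the classes [A/(f₁,…,f_p)] of cyclic modules where f₁,…,f_p ranges over regular sequences in A (such a quotient lies in M^p(A) since the ideal generated by a length-p regular sequence has height ≥ p), then the canonical homomorphism K₀(M^p(A)) → K₀(M^{p−1}(A)) induced by the inclusion M^p(A) ⊆ M^{p−1}(A) is the zero map. -/
open RingTheory

/-- A presentation of a finitely generated `A`-module: a number of generators `n`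
together with a submodule of relations in `A^n`.  Every finitely generated module over a
(noetherian) commutative ring is isomorphic to the module presented by such a datum. -/
def PModule (A : Type) [CommRing A] : Type := Σ n : ℕ, Submodule A (Fin n → A)

/-- The finitely generated module presented by a presentation. -/
abbrev PModule.Mdl {A : Type} [CommRing A] (o : PModule A) : Type := (Fin o.1 → A) ⧸ o.2

/-- Membership in the category `M^p(A)` of finitely generated modules all of whose
supporting primes have height `≥ p` (`Codim_{Spec A} Supp M ≥ p`). -/
def InCat (A : Type) [CommRing A] (p : ℕ) (M : Type) [AddCommGroup M] [Module A M] :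
    Prop :=
  ∀ P ∈ Module.support A M, (p : ℕ∞) ≤ Order.height P

theorem InCat.mono {A : Type} [CommRing A] {p q : ℕ} (h : q ≤ p) {M : Type}
    [AddCommGroup M] [Module A M] (hM : InCat A p M) : InCat A q M :=
  fun P hP => le_trans (Nat.cast_le.mpr h) (hM P hP)

/-- The generators of the Grothendieck group `K₀(M^p(A))`: (presented) objects
of `M^p(A)`. -/
def K0Gen (A : Type) [CommRing A] (p : ℕ) : Type :=
  {o : PModule A // InCat A p o.Mdl}

/-- The defining relations of `K₀(M^p(A))`: for every short exact sequence
`0 → M' → M → M'' → 0` in `M^p(A)`, the element `[M] - [M'] - [M'']`. -/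
def K0Rel (A : Type) [CommRing A] (p : ℕ) : Set (FreeAbelianGroup (K0Gen A p)) :=
  {x | ∃ (a b c : K0Gen A p) (f : a.1.Mdl →ₗ[A] b.1.Mdl) (g : b.1.Mdl →ₗ[A] c.1.Mdl),
    Function.Injective f ∧ Function.Surjective g ∧
    LinearMap.range f = LinearMap.ker g ∧
    x = FreeAbelianGroup.of b - FreeAbelianGroup.of a - FreeAbelianGroup.of c}

/-- The Grothendieck group `K₀(M^p(A))`: the free abelian group on the objects of
`M^p(A)` modulo the relations coming from short exact sequences (these relations also
identify isomorphic objects, via short exact sequences with zero third term). -/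
abbrev K0 (A : Type) [CommRing A] (p : ℕ) : Type :=
  FreeAbelianGroup (K0Gen A p) ⧸ AddSubgroup.closure (K0Rel A p)

/-- The class `[M]` in `K₀(M^p(A))` of an object `M` of `M^p(A)`. -/
def K0cls (A : Type) [CommRing A] (p : ℕ) (o : PModule A) (ho : InCat A p o.Mdl) :
    K0 A p :=
  QuotientAddGroup.mk (FreeAbelianGroup.of ⟨o, ho⟩)

/-- A commutative ring is regular local if it is noetherian local and its maximal ideal
is generated by `dim B` elements. -/
def IsRegularLocal (B : Type) [CommRing B] : Prop :=
  IsNoetherianRing B ∧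
    ∃ h : IsLocalRing B,
      ∃ s : Finset B, Ideal.span (s : Set B) = @IsLocalRing.maximalIdeal B _ h ∧
        (s.card : WithBot ℕ∞) = ringKrullDim B

section AuxLemmas
open Pointwise Submodule


lemma notMemMinimal {A : Type} [CommRing A] {a : A}
    (ha : IsSMulRegular A a) {m : Ideal A} (hm : m ∈ minimalPrimes A) : a ∉ m := by
  intro hmem
  haveI : m.IsPrime := hm.1.1
  set S := Localization.AtPrime m
  have h1 : algebraMap A S a ∈ IsLocalRing.maximalIdeal S :=
    (IsLocalization.AtPrime.to_map_mem_maximal_iff S m a).mpr hmem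
  obtain ⟨n, hn⟩ := (by
    haveI : Ring.KrullDimLE 0 S := .of_isLocalization _ hm _
    exact Ring.KrullDimLE.isNilpotent_iff_mem_maximalIdeal.mpr h1 : IsNilpotent (algebraMap A S a))
  rw [← map_pow] at hn
  obtain ⟨c, hc⟩ := (IsLocalization.map_eq_zero_iff m.primeCompl S _).mp hn
  have hc0 : (c : A) = 0 := by
    apply ha.pow n
    simpa [smul_eq_mul, mul_comm] using hc
  exact c.2 (hc0 ▸ m.zero_mem)

lemma chainOfRegular : ∀ (n : ℕ) (A : Type) [CommRing A] (l : List A),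
    l.length = n → Sequence.IsWeaklyRegular A l → ∀ (P : PrimeSpectrum A),
    (∀ x ∈ l, x ∈ P.asIdeal) →
    ∃ c : LTSeries (PrimeSpectrum A), c.length = n ∧ c.last = P := by
  intro n
  induction n with
  | zero =>
    intro A _ l _ _ P _
    exact ⟨RelSeries.singleton _ P, rfl, rfl⟩
  | succ n ih =>
    intro A _ l hl hreg P hP
    match l, hl, hreg, hP with
    | a :: t, hl, hreg, hP =>
    rw [Sequence.isWeaklyRegular_cons_iff'] at hreg
    obtain ⟨h1, h2⟩ := hreg
    set A' := A ⧸ Ideal.span {a}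
    -- transport weak regularity to the quotient ring
    have heq : (a • ⊤ : Submodule A A) = (Ideal.span {a} : Ideal A) := by
      rw [← Submodule.ideal_span_singleton_smul, smul_eq_mul, Ideal.mul_top]
    have h2' : Sequence.IsWeaklyRegular A' (t.map (Ideal.Quotient.mk (Ideal.span {a}))) := by
      refine (AddEquiv.isWeaklyRegular_congr (e := (Submodule.quotEquivOfEq _ _ heq).toAddEquiv)
        ?_).mp h2
      rw [List.forall₂_map_right_iff, List.forall₂_map_left_iff]
      refine List.forall₂_same.mpr fun r _ x => ?_
      obtain ⟨y, rfl⟩ := Submodule.Quotient.mk_surjective _ x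
      rfl
    have haP : a ∈ P.asIdeal := hP a List.mem_cons_self
    have hker : RingHom.ker (Ideal.Quotient.mk (Ideal.span {a})) ≤ P.asIdeal := by
      rw [Ideal.mk_ker, Ideal.span_le, Set.singleton_subset_iff]; exact haP
    haveI := P.isPrime
    haveI : (P.asIdeal.map (Ideal.Quotient.mk (Ideal.span {a}))).IsPrime :=
      Ideal.map_isPrime_of_surjective Ideal.Quotient.mk_surjective hker
    set P' : PrimeSpectrum A' := ⟨P.asIdeal.map (Ideal.Quotient.mk (Ideal.span {a})), this⟩
    have hP' : ∀ x ∈ t.map (Ideal.Quotient.mk (Ideal.span {a})), x ∈ P'.asIdeal := by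
      intro x hx
      obtain ⟨y, hy, rfl⟩ := List.mem_map.mp hx
      exact Ideal.mem_map_of_mem _ (hP y (List.mem_cons_of_mem _ hy))
    obtain ⟨c', hc'len, hc'last⟩ := ih A' (t.map _) (by simpa using Nat.succ_injective hl) h2' P' hP'
    set F : PrimeSpectrum A' → PrimeSpectrum A :=
      (PrimeSpectrum.comap (Ideal.Quotient.mk (Ideal.span {a})))
    have hFmono : Monotone F := fun x y h => Ideal.comap_mono h
    have hFsm : StrictMono F := hFmono.strictMono_of_injective
      (PrimeSpectrum.comap_injective_of_surjective _ Ideal.Quotient.mk_surjective)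
    set c := c'.map F hFsm
    have hclast : c.last = P := by
      rw [LTSeries.last_map, hc'last]
      ext1
      show Ideal.comap _ (Ideal.map _ P.asIdeal) = P.asIdeal
      rw [Ideal.comap_map_of_surjective _ Ideal.Quotient.mk_surjective]
      exact sup_eq_left.mpr hker
    have hahead : a ∈ c.head.asIdeal := by
      rw [LTSeries.head_map]
      show a ∈ Ideal.comap _ _
      rw [Ideal.mem_comap]
      have hz : (Ideal.Quotient.mk (Ideal.span {a})) a = 0 :=
        Ideal.Quotient.eq_zero_iff_mem.mpr (Ideal.subset_span rfl)
      rw [hz]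
      exact Ideal.zero_mem _
    haveI := c.head.isPrime
    obtain ⟨m, hm, hmle⟩ := Ideal.exists_minimalPrimes_le (bot_le (a := c.head.asIdeal))
    haveI hmp : m.IsPrime := hm.1.1
    have hmne : m ≠ c.head.asIdeal := fun h => notMemMinimal h1 hm (h ▸ hahead)
    have hlt : (⟨m, hmp⟩ : PrimeSpectrum A) < c.head :=
      lt_of_le_of_ne hmle (fun h => hmne (congrArg PrimeSpectrum.asIdeal h))
    refine ⟨c.cons ⟨m, hmp⟩ hlt, ?_, ?_⟩
    · simp only [RelSeries.cons_length]
      show c.length + 1 = n + 1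
      simp [c, hc'len]
    · rw [RelSeries.last_cons]; exact hclast

lemma heightGe (A : Type) [CommRing A] (l : List A)
    (hreg : Sequence.IsWeaklyRegular A l) (P : PrimeSpectrum A)
    (hP : ∀ x ∈ l, x ∈ P.asIdeal) : (l.length : ℕ∞) ≤ Order.height P := by
  obtain ⟨c, hlen, hlast⟩ := chainOfRegular l.length A l rfl hreg P hP
  calc (l.length : ℕ∞) = c.length := by rw [hlen]
    _ ≤ Order.height c.last := Order.length_le_height_last
    _ = Order.height P := by rw [hlast]

noncomputable def presIdeal (A : Type) [CommRing A] (I : Ideal A) : PModule A :=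
  ⟨1, Submodule.comap (LinearEquiv.funUnique (Fin 1) A A).toLinearMap I⟩

noncomputable def presEquiv (A : Type) [CommRing A] (I : Ideal A) :
    (presIdeal A I).Mdl ≃ₗ[A] (A ⧸ I) :=
  Submodule.Quotient.equiv _ I (LinearEquiv.funUnique (Fin 1) A A)
    (Submodule.map_comap_eq_of_surjective (LinearEquiv.funUnique (Fin 1) A A).surjective I)

lemma cyclicZero (A : Type) [CommRing A] (k : ℕ) (f : Fin (k + 1) → A)
    (hf : Sequence.IsRegular A (List.ofFn f)) (o : PModule A)
    (e : o.Mdl ≃ₗ[A] A ⧸ Ideal.span (Set.range f)) (hok : InCat A k o.Mdl) :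
    K0cls A k o hok = 0 := by
  classical
  set g : Fin k → A := Fin.init f with hg
  set fp : A := f (Fin.last k) with hfp
  set I : Ideal A := Ideal.span (Set.range g) with hI
  set J : Ideal A := Ideal.span (Set.range f) with hJ
  have h_ofFn : List.ofFn f = List.ofFn g ++ [fp] := by
    rw [List.ofFn_succ' f, List.concat_eq_append]; rfl
  have hI_ofList : Ideal.ofList (List.ofFn g) = I := by
    show Ideal.span {x | x ∈ List.ofFn g} = I
    congr 1
    ext x
    exact List.mem_ofFn' g x
  have hw := hf.toIsWeaklyRegular
  rw [h_ofFn, Sequence.isWeaklyRegular_append_iff] at hw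
  obtain ⟨hw1, hw2⟩ := hw
  have heqI : (Ideal.ofList (List.ofFn g) • ⊤ : Submodule A A) = I := by
    rw [smul_eq_mul, Ideal.mul_top, hI_ofList]
  have hsmul : IsSMulRegular (A ⧸ I) fp := by
    rw [Sequence.isWeaklyRegular_singleton_iff] at hw2
    exact ((Submodule.quotEquivOfEq _ _ heqI).isSMulRegular_congr fp).mp hw2
  have hrange_f : Set.range f = insert fp (Set.range g) := by
    ext x
    constructor
    · rintro ⟨i, rfl⟩
      rcases Fin.eq_castSucc_or_eq_last i with ⟨j, rfl⟩ | rfl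
      · exact Or.inr ⟨j, rfl⟩
      · exact Or.inl rfl
    · rintro (rfl | ⟨j, rfl⟩)
      · exact ⟨Fin.last k, rfl⟩
      · exact ⟨j.castSucc, rfl⟩
  have hJIfp : J = I ⊔ Ideal.span {fp} := by
    rw [hJ, hrange_f, Ideal.span_insert, sup_comm]
  have hIJ : I ≤ J := by rw [hJIfp]; exact le_sup_left
  have hfpJ : fp ∈ J := Ideal.subset_span ⟨Fin.last k, rfl⟩
  -- the middle object
  have hbIn : InCat A k (presIdeal A I).Mdl := by
    intro P hP
    rw [(presEquiv A I).support_eq, Module.mem_support_iff_of_finite,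
      Ideal.annihilator_quotient] at hP
    have hmem : ∀ x ∈ List.ofFn g, x ∈ P.asIdeal := fun x hx =>
      hP (Ideal.subset_span ((List.mem_ofFn' g x).mp hx))
    simpa using heightGe A (List.ofFn g) hw1 P hmem
  set b : K0Gen A k := ⟨presIdeal A I, hbIn⟩ with hb
  set cg : K0Gen A k := ⟨o, hok⟩ with hcg
  set eb : (presIdeal A I).Mdl ≃ₗ[A] (A ⧸ I) := presEquiv A I with heb
  set L : (A ⧸ I) →ₗ[A] (A ⧸ I) := LinearMap.lsmul A (A ⧸ I) fp with hL
  have hIJ' : I ≤ Submodule.comap (LinearMap.id : A →ₗ[A] A) J := by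
    rw [Submodule.comap_id]; exact hIJ
  set π : (A ⧸ I) →ₗ[A] (A ⧸ J) := Submodule.mapQ I J LinearMap.id hIJ' with hπ
  have hπapp : ∀ y : A, π (Submodule.Quotient.mk y) = Submodule.Quotient.mk y := fun y =>
    Submodule.mapQ_apply I _ _ y
  set F : b.1.Mdl →ₗ[A] b.1.Mdl := eb.symm.toLinearMap ∘ₗ L ∘ₗ eb.toLinearMap with hF
  set G : b.1.Mdl →ₗ[A] cg.1.Mdl := e.symm.toLinearMap ∘ₗ π ∘ₗ eb.toLinearMap with hG
  have hFapp : ∀ x, F x = eb.symm (L (eb x)) := fun x => rfl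
  have hGapp : ∀ x, G x = e.symm (π (eb x)) := fun x => rfl
  have hFinj : Function.Injective F := by
    intro x y hxy
    rw [hFapp, hFapp] at hxy
    exact eb.injective (hsmul (eb.symm.injective hxy))
  have hGsurj : Function.Surjective G := by
    intro z
    obtain ⟨w, rfl⟩ := e.symm.surjective z
    obtain ⟨y, rfl⟩ := Submodule.Quotient.mk_surjective J w
    exact ⟨eb.symm (Submodule.Quotient.mk y), by
      rw [hGapp, eb.apply_symm_apply, hπapp]⟩
  have hLπ : LinearMap.range L = LinearMap.ker π := by
    ext x
    simp only [LinearMap.mem_range, LinearMap.mem_ker]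
    constructor
    · rintro ⟨y, rfl⟩
      obtain ⟨z, rfl⟩ := Submodule.Quotient.mk_surjective I y
      have h1 : L (Submodule.Quotient.mk z) = Submodule.Quotient.mk (fp • z) := by
        rw [Submodule.Quotient.mk_smul]; rfl
      rw [h1, hπapp, Submodule.Quotient.mk_eq_zero]
      rw [smul_eq_mul]
      exact J.mul_mem_right z hfpJ
    · intro hx
      obtain ⟨y, rfl⟩ := Submodule.Quotient.mk_surjective I x
      rw [hπapp, Submodule.Quotient.mk_eq_zero] at hx
      rw [hJIfp] at hx
      obtain ⟨i, hi, z, hz, rfl⟩ := Submodule.mem_sup.mp hx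
      obtain ⟨c, rfl⟩ := Ideal.mem_span_singleton'.mp hz
      refine ⟨Submodule.Quotient.mk c, ?_⟩
      have h1 : L (Submodule.Quotient.mk c) = Submodule.Quotient.mk (fp • c) := by
        rw [Submodule.Quotient.mk_smul]; rfl
      rw [h1, Submodule.Quotient.eq]
      have h2 : fp • c - (i + c * fp) = -i := by rw [smul_eq_mul]; ring
      rw [h2]
      exact I.neg_mem hi
  have hrange : LinearMap.range F = LinearMap.ker G := by
    ext x
    simp only [LinearMap.mem_range, LinearMap.mem_ker]
    constructor
    · rintro ⟨y, rfl⟩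
      rw [hGapp, hFapp, eb.apply_symm_apply]
      have h3 : π (L (eb y)) = 0 := by
        have : L (eb y) ∈ LinearMap.ker π := hLπ ▸ LinearMap.mem_range_self L (eb y)
        exact LinearMap.mem_ker.mp this
      rw [h3, map_zero]
    · intro hx
      rw [hGapp] at hx
      have h2 : π (eb x) = 0 := by
        have := congrArg e hx
        rwa [e.apply_symm_apply, map_zero] at this
      have h3 : eb x ∈ LinearMap.range L := by
        rw [hLπ]; exact LinearMap.mem_ker.mpr h2
      obtain ⟨y, hy⟩ := h3
      refine ⟨eb.symm y, ?_⟩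
      rw [hFapp, eb.apply_symm_apply, hy, eb.symm_apply_apply]
  have hrel : (FreeAbelianGroup.of b - FreeAbelianGroup.of b - FreeAbelianGroup.of cg)
      ∈ K0Rel A k := ⟨b, b, cg, F, G, hFinj, hGsurj, hrange, rfl⟩
  have h0 : (QuotientAddGroup.mk (FreeAbelianGroup.of b - FreeAbelianGroup.of b
      - FreeAbelianGroup.of cg) : K0 A k) = 0 :=
    (QuotientAddGroup.eq_zero_iff _).mpr (AddSubgroup.subset_closure hrel)
  have hsimp : FreeAbelianGroup.of b - FreeAbelianGroup.of b - FreeAbelianGroup.of cg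
      = -(FreeAbelianGroup.of cg) := by abel
  rw [hsimp] at h0
  have h1 : -(QuotientAddGroup.mk (FreeAbelianGroup.of cg) : K0 A k) = 0 := h0
  rw [neg_eq_zero] at h1
  exact h1

end AuxLemmas

/-- Let `A` be a commutative noetherian regular domain of finite Krull
dimension and `1 ≤ p ≤ dim A`.  If `K₀(M^p(A))` is generated by the classes of cyclic
modules `A/(f₁,…,f_p)` for regular sequences `f₁,…,f_p`, then the canonical map
`K₀(M^p(A)) → K₀(M^{p-1}(A))` (sending `[M]` to `[M]`) is zero. -/
theorem stmt4 (A : Type) [CommRing A] [IsDomain A] [IsNoetherianRing A]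
    (hreg : ∀ P : Ideal A, ∀ _ : P.IsPrime, IsRegularLocal (Localization.AtPrime P))
    (hfin : ∃ d : ℕ, ringKrullDim A = d)
    (p : ℕ) (hp : 1 ≤ p) (hpdim : (p : WithBot ℕ∞) ≤ ringKrullDim A)
    (hgen : AddSubgroup.closure
        {x : K0 A p | ∃ f : Fin p → A, Sequence.IsRegular A (List.ofFn f) ∧
          ∃ (o : PModule A) (ho : InCat A p o.Mdl),
            Nonempty (o.Mdl ≃ₗ[A] A ⧸ Ideal.span (Set.range f)) ∧
            x = K0cls A p o ho} = ⊤) :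
    ∀ (o : PModule A) (ho : InCat A p o.Mdl),
      K0cls A (p - 1) o (ho.mono (Nat.sub_le p 1)) = 0 := by
  obtain ⟨k, rfl⟩ : ∃ k, p = k + 1 := ⟨p - 1, (Nat.succ_pred_eq_of_pos hp).symm⟩
  intro o ho
  let ι : K0Gen A (k + 1) → K0Gen A k := fun x => ⟨x.1, x.2.mono k.le_succ⟩
  let Fmap : FreeAbelianGroup (K0Gen A (k + 1)) →+ FreeAbelianGroup (K0Gen A k) :=
    FreeAbelianGroup.map ι
  have hrel : ∀ x ∈ K0Rel A (k + 1), Fmap x ∈ K0Rel A k := by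
    rintro x ⟨a, b, c, f', g', hinj, hsurj, hrk, rfl⟩
    refine ⟨ι a, ι b, ι c, f', g', hinj, hsurj, hrk, ?_⟩
    simp only [Fmap, map_sub, FreeAbelianGroup.map_of_apply]
  have hle : AddSubgroup.closure (K0Rel A (k + 1)) ≤
      (AddSubgroup.closure (K0Rel A k)).comap Fmap :=
    (AddSubgroup.closure_le _).mpr fun x hx => AddSubgroup.subset_closure (hrel x hx)
  let φ : K0 A (k + 1) →+ K0 A k := QuotientAddGroup.map _ _ Fmap hle
  have hφ : ∀ (o' : PModule A) (ho' : InCat A (k + 1) o'.Mdl),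
      φ (K0cls A (k + 1) o' ho') = K0cls A k o' (ho'.mono k.le_succ) := by
    intro o' ho'
    show φ (QuotientAddGroup.mk _) = _
    rw [show (φ (QuotientAddGroup.mk (FreeAbelianGroup.of ⟨o', ho'⟩)) : K0 A k)
      = QuotientAddGroup.mk (Fmap (FreeAbelianGroup.of ⟨o', ho'⟩)) from
        QuotientAddGroup.map_mk _ _ _ _ _,
      show Fmap (FreeAbelianGroup.of ⟨o', ho'⟩) = FreeAbelianGroup.of (ι ⟨o', ho'⟩) from
        FreeAbelianGroup.map_of_apply _]
    rfl
  have hgen' : K0cls A (k + 1) o ho ∈ AddSubgroup.closure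
      {x : K0 A (k + 1) | ∃ f : Fin (k + 1) → A, Sequence.IsRegular A (List.ofFn f) ∧
        ∃ (o' : PModule A) (ho' : InCat A (k + 1) o'.Mdl),
          Nonempty (o'.Mdl ≃ₗ[A] A ⧸ Ideal.span (Set.range f)) ∧
          x = K0cls A (k + 1) o' ho'} := by
    rw [hgen]; trivial
  have hzero : φ (K0cls A (k + 1) o ho) = 0 := by
    refine AddSubgroup.closure_induction ?_ (map_zero φ) ?_ ?_ hgen'
    · rintro x ⟨f, hf, o', ho', ⟨e⟩, rfl⟩
      rw [hφ o' ho']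
      exact cyclicZero A k f hf o' e (ho'.mono k.le_succ)
    · intro x y _ _ hx hy; rw [map_add, hx, hy, add_zero]
    · intro x _ hx; rw [map_neg, hx, neg_zero]
  have hfinal := (hφ o ho).symm.trans hzero
  exact hfinal
end

section
/- Let I and J be small categories and X a small category with equivalence relations. Define A : LAX(I, LAX(J, X)) → LAX(I × J, X) by A(f)(i, j) = f(i)(j), A(f)(a, b) = f(a)(j₂)∘f(i₁)(b) for (a, b) : (i₁, j₁) → (i₂, j₂), and A(x)(i, j) = x(i)(j) on deformations; define B : LAX(I × J, X) → LAX(I, LAX(J, X)) by B(f)(i)(j) = f(i, j), B(f)(a)(j) = f(a, id_j), B(f)(i)(b) = f(id_i, b), and B(x)(i)(j) = x(i, j) on deformations. Then A and B are well defined, are functors preserving the (pointwise) equivalence relations, B∘A is the identity of LAX(I, LAX(J, X)), and the families of identity morphisms define a deformation Θ : A∘B ⇒ id of endofunctors of LAX(I × J, X) which is relative to objects (i.e. A(B(f))(i, j) = f(i, j) for every lax functor f and every object (i, j), each component of Θ is an identity, and A(B(f))(a, b) ~ f(a, b) for every morphism (a, b)). -/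
open CategoryTheory

/-- A category with equivalence relations. -/
class CatER (X : Type*) [Category X] where
  rel : ∀ {A B : X}, (A ⟶ B) → (A ⟶ B) → Prop
  equiv : ∀ {A B : X}, Equivalence (fun f g : A ⟶ B => rel f g)
  comp_left : ∀ {A B C : X} (a : A ⟶ B) {x y : B ⟶ C}, rel x y → rel (a ≫ x) (a ≫ y)
  comp_right : ∀ {A B C : X} {x y : A ⟶ B} (b : B ⟶ C), rel x y → rel (x ≫ b) (y ≫ b)

/-- A lax functor from an ordinary category to a category with equivalence relations. -/
structure LaxFunctor (I : Type*) [Category I] (X : Type*) [Category X] [CatER X] where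
  obj : I → X
  map : ∀ {i j : I}, (i ⟶ j) → (obj i ⟶ obj j)
  map_id : ∀ i : I, map (𝟙 i) = 𝟙 (obj i)
  map_comp : ∀ {i j k : I} (a : i ⟶ j) (b : j ⟶ k),
    CatER.rel (map (a ≫ b)) (map a ≫ map b)

/-- A (lax) deformation between lax functors. -/
structure Deformation {I : Type*} [Category I] {X : Type*} [Category X] [CatER X]
    (x y : LaxFunctor I X) where
  app : ∀ i : I, x.obj i ⟶ y.obj i
  natural : ∀ {i j : I} (a : i ⟶ j), CatER.rel (x.map a ≫ app j) (app i ≫ y.map a)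

namespace Deformation

variable {I : Type*} [Category I] {X : Type*} [Category X] [CatER X]

theorem ext' : ∀ {x y : LaxFunctor I X} {f g : Deformation x y},
    (∀ i, f.app i = g.app i) → f = g
  | _, _, ⟨a, _⟩, ⟨b, _⟩, h => by
    obtain rfl : a = b := funext h
    rfl

/-- The identity deformation. -/
def id (x : LaxFunctor I X) : Deformation x x where
  app i := 𝟙 (x.obj i)
  natural a := by simpa using CatER.equiv.refl (x.map a)

/-- Pointwise composition of deformations. -/
def comp {x y z : LaxFunctor I X} (f : Deformation x y) (g : Deformation y z) :
    Deformation x z where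
  app i := f.app i ≫ g.app i
  natural {i j} a := by
    have h1 : CatER.rel ((x.map a ≫ f.app j) ≫ g.app j) ((f.app i ≫ y.map a) ≫ g.app j) :=
      CatER.comp_right _ (f.natural a)
    have h2 : CatER.rel (f.app i ≫ y.map a ≫ g.app j) (f.app i ≫ g.app i ≫ z.map a) :=
      CatER.comp_left _ (g.natural a)
    have h3 := CatER.equiv.trans (by simpa using h1) h2
    simpa using h3

end Deformation

/-- The category `LAX(I, X)` of lax functors and deformations. -/
instance LaxCat (I : Type*) [Category I] (X : Type*) [Category X] [CatER X] :
    Category (LaxFunctor I X) where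
  Hom := Deformation
  id := Deformation.id
  comp := Deformation.comp
  id_comp f := Deformation.ext' (fun i => Category.id_comp (f.app i))
  comp_id f := Deformation.ext' (fun i => Category.comp_id (f.app i))
  assoc f g h := Deformation.ext' (fun i => Category.assoc _ _ _)

/-- `LAX(I, X)` with the pointwise relation is a category with equivalence relations. -/
instance LaxCatER (I : Type*) [Category I] (X : Type*) [Category X] [CatER X] :
    CatER (LaxFunctor I X) where
  rel f g := ∀ i, CatER.rel (f.app i) (g.app i)
  equiv :=
    ⟨fun _ _ => CatER.equiv.refl _, fun h i => CatER.equiv.symm (h i),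
      fun h₁ h₂ i => CatER.equiv.trans (h₁ i) (h₂ i)⟩
  comp_left := fun {A B C} a {x y} h i => CatER.comp_left _ (h i)
  comp_right := fun {A B C} {x y} b h i => CatER.comp_right _ (h i)

section Aux

variable {I J : Type} [SmallCategory I] [SmallCategory J]
  {X : Type} [SmallCategory X] [CatER X]

@[simp] theorem Deformation.id_app' {C : Type*} [Category C] (x : LaxFunctor C X) (j : C) :
    (𝟙 x : x ⟶ x).app j = 𝟙 (x.obj j) := rfl

@[simp] theorem Deformation.comp_app' {C : Type*} [Category C] {x y z : LaxFunctor C X}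
    (f : x ⟶ y) (g : y ⟶ z) (j : C) : (f ≫ g).app j = f.app j ≫ g.app j := rfl

theorem Deformation.eqToHom_app' {C : Type*} [Category C] {x y : LaxFunctor C X}
    (h : x = y) (j : C) :
    (eqToHom h).app j = eqToHom (congrArg (fun z : LaxFunctor C X => z.obj j) h) := by
  subst h; simp

theorem eqToHom_refl'' {C : Type*} [Category C] {a : C} (h : a = a) : eqToHom h = 𝟙 a := rfl

theorem CatER.rel_comp {A B C : X} {x x' : A ⟶ B} {y y' : B ⟶ C}
    (hx : CatER.rel x x') (hy : CatER.rel y y') : CatER.rel (x ≫ y) (x' ≫ y') :=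
  CatER.equiv.trans (CatER.comp_right _ hx) (CatER.comp_left _ hy)

theorem LaxFunctor.hext {C : Type*} [Category C] {x y : LaxFunctor C X}
    (hobj : ∀ i, x.obj i = y.obj i)
    (hmap : ∀ {i j : C} (a : i ⟶ j),
      x.map a = eqToHom (hobj i) ≫ y.map a ≫ eqToHom (hobj j).symm) : x = y := by
  obtain ⟨xo, xm, hxi, hxc⟩ := x
  obtain ⟨yo, ym, hyi, hyc⟩ := y
  obtain rfl : xo = yo := funext hobj
  have hm : @xm = @ym := by
    funext i j a
    simpa using hmap a
  cases hm
  rfl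

/-- A morphism in the product category. -/
def pmk {i₁ i₂ : I} {j₁ j₂ : J} (a : i₁ ⟶ i₂) (b : j₁ ⟶ j₂) :
    ((i₁, j₁) : I × J) ⟶ (i₂, j₂) := (a, b)

theorem pmk_comp {i₁ i₂ i₃ : I} {j₁ j₂ j₃ : J} (a : i₁ ⟶ i₂) (a' : i₂ ⟶ i₃)
    (b : j₁ ⟶ j₂) (b' : j₂ ⟶ j₃) :
    pmk a b ≫ pmk a' b' = pmk (a ≫ a') (b ≫ b') := rfl

theorem pmk_id (i : I) (j : J) : pmk (𝟙 i) (𝟙 j) = 𝟙 ((i, j) : I × J) := rfl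

theorem pmk_eta {ij ij' : I × J} (m : ij ⟶ ij') : pmk m.1 m.2 = m := rfl

/-- The functor `A : LAX(I, LAX(J, X)) → LAX(I × J, X)`. -/
def funA (I J X : Type) [SmallCategory I] [SmallCategory J] [SmallCategory X] [CatER X] :
    (LaxFunctor I (LaxFunctor J X)) ⥤ (LaxFunctor (I × J) X) where
  obj f :=
  { obj := fun ij => (f.obj ij.1).obj ij.2
    map := fun {ij ij'} m => (f.obj ij.1).map m.2 ≫ (f.map m.1).app ij'.2
    map_id := fun ij => by
      show (f.obj ij.1).map (𝟙 ij.2) ≫ (f.map (𝟙 ij.1)).app ij.2 = _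
      rw [(f.obj ij.1).map_id, f.map_id]
      simp
    map_comp := fun {ij₁ ij₂ ij₃} m m' => by
      obtain ⟨i₁, j₁⟩ := ij₁; obtain ⟨i₂, j₂⟩ := ij₂; obtain ⟨i₃, j₃⟩ := ij₃
      obtain ⟨a, b⟩ := m; obtain ⟨a', b'⟩ := m'
      have h4 : CatER.rel ((f.obj i₁).map (b ≫ b') ≫ (f.map (a ≫ a')).app j₃)
          (((f.obj i₁).map b ≫ (f.obj i₁).map b') ≫
            ((f.map a).app j₃ ≫ (f.map a').app j₃)) :=
        CatER.rel_comp ((f.obj i₁).map_comp b b') (f.map_comp a a' j₃)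
      have h5 := CatER.comp_left ((f.obj i₁).map b)
        (CatER.comp_right ((f.map a').app j₃) ((f.map a).natural b'))
      simp only [Category.assoc] at h4 h5 ⊢
      exact CatER.equiv.trans h4 h5 }
  map {f g} d :=
  { app := fun ij => (d.app ij.1).app ij.2
    natural := fun {ij ij'} m => by
      obtain ⟨i₁, j₁⟩ := ij; obtain ⟨i₂, j₂⟩ := ij'
      obtain ⟨a, b⟩ := m
      have h1 := CatER.comp_left ((f.obj i₁).map b) (d.natural a j₂)
      have h2 := CatER.comp_right ((g.map a).app j₂) ((d.app i₁).natural b)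
      simp only [Category.assoc] at h1 h2 ⊢
      exact CatER.equiv.trans h1 h2 }
  map_id f := Deformation.ext' fun ij => rfl
  map_comp d₁ d₂ := Deformation.ext' fun ij => rfl

/-- The functor `B : LAX(I × J, X) → LAX(I, LAX(J, X))`. -/
def funB (I J X : Type) [SmallCategory I] [SmallCategory J] [SmallCategory X] [CatER X] :
    (LaxFunctor (I × J) X) ⥤ (LaxFunctor I (LaxFunctor J X)) where
  obj f :=
  { obj := fun i =>
    { obj := fun j => f.obj (i, j)
      map := fun {j₁ j₂} b => f.map (pmk (𝟙 i) b)
      map_id := fun j => f.map_id (i, j)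
      map_comp := fun {j₁ j₂ j₃} b b' => by
        have e : pmk (𝟙 i) (b ≫ b') = pmk (𝟙 i) b ≫ pmk (𝟙 i) b' := by
          rw [pmk_comp, Category.id_comp]
        show CatER.rel (f.map (pmk (𝟙 i) (b ≫ b'))) _
        rw [e]
        exact f.map_comp _ _ }
    map := fun {i₁ i₂} a =>
    { app := fun j => f.map (pmk a (𝟙 j))
      natural := fun {j₁ j₂} b => by
        have h1 := f.map_comp (pmk (𝟙 i₁) b) (pmk a (𝟙 j₂))
        have h2 := f.map_comp (pmk a (𝟙 j₁)) (pmk (𝟙 i₂) b)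
        rw [pmk_comp, Category.id_comp, Category.comp_id] at h1
        rw [pmk_comp, Category.id_comp, Category.comp_id] at h2
        exact CatER.equiv.trans (CatER.equiv.symm h1) h2 }
    map_id := fun i => Deformation.ext' fun j => by
      show f.map (pmk (𝟙 i) (𝟙 j)) = _
      rw [pmk_id, f.map_id]
      rfl
    map_comp := fun {i₁ i₂ i₃} a a' j => by
      have h := f.map_comp (pmk a (𝟙 j)) (pmk a' (𝟙 j))
      rw [pmk_comp, Category.comp_id] at h
      exact h }
  map {f g} d :=
  { app := fun i =>
    { app := fun j => d.app (i, j)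
      natural := fun {j₁ j₂} b => d.natural (pmk (𝟙 i) b) }
    natural := fun {i₁ i₂} a j => d.natural (pmk a (𝟙 j)) }
  map_id f := Deformation.ext' fun i => Deformation.ext' fun j => rfl
  map_comp d₁ d₂ := Deformation.ext' fun i => Deformation.ext' fun j => rfl

theorem BA_obj_i (f : LaxFunctor I (LaxFunctor J X)) (i : I) :
    ((funB I J X).obj ((funA I J X).obj f)).obj i = f.obj i := by
  refine LaxFunctor.hext (fun j => rfl) (fun {j₁ j₂} b => ?_)
  show (f.obj i).map b ≫ (f.map (𝟙 i)).app j₂ = _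
  rw [f.map_id]
  simp
  erw [eqToHom_refl'', eqToHom_refl'', Category.id_comp, Category.comp_id]

theorem BA_obj (f : LaxFunctor I (LaxFunctor J X)) :
    (funB I J X).obj ((funA I J X).obj f) = f := by
  refine LaxFunctor.hext (BA_obj_i f) (fun {i₁ i₂} a => ?_)
  refine Deformation.ext' fun j => ?_
  show (f.obj i₁).map (𝟙 j) ≫ (f.map a).app j = _
  rw [(f.obj i₁).map_id, Category.id_comp]
  rw [Deformation.comp_app', Deformation.comp_app', Deformation.eqToHom_app',
    Deformation.eqToHom_app']
  erw [eqToHom_refl'', eqToHom_refl'', Category.id_comp, Category.comp_id]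

theorem ABmap_rel (f : LaxFunctor (I × J) X) {ij ij' : I × J} (m : ij ⟶ ij') :
    CatER.rel (((funA I J X).obj ((funB I J X).obj f)).map m) (f.map m) := by
  have h := f.map_comp (pmk (𝟙 ij.1) m.2) (pmk m.1 (𝟙 ij'.2))
  rw [pmk_comp, Category.id_comp, Category.comp_id, pmk_eta] at h
  exact CatER.equiv.symm h

end Aux
/-- the lax exponential law.  For small categories `I`, `J` and a
small category with equivalence relations `X`, the functors
`A : LAX(I, LAX(J, X)) → LAX(I × J, X)` and `B : LAX(I × J, X) → LAX(I, LAX(J, X))`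
defined by `A(f)(i, j) = f(i)(j)`, `A(f)(a, b) = f(a)(j₂)∘f(i₁)(b)`,
`B(f)(i)(j) = f(i, j)`, `B(f)(a)(j) = f(a, id)`, `B(f)(i)(b) = f(id, b)` (and acting
pointwise on deformations) are well defined, preserve the pointwise equivalence
relations, satisfy `B∘A = id`, and the identity morphisms define a deformation
`Θ : A∘B ⇒ id` relative to objects. -/
theorem stmt11 (I J : Type) [SmallCategory I] [SmallCategory J]
    (X : Type) [SmallCategory X] [CatER X] :
    ∃ (A : (LaxFunctor I (LaxFunctor J X)) ⥤ (LaxFunctor (I × J) X))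
      (B : (LaxFunctor (I × J) X) ⥤ (LaxFunctor I (LaxFunctor J X)))
      (hAobj : ∀ (f : LaxFunctor I (LaxFunctor J X)) (ij : I × J),
        (A.obj f).obj ij = (f.obj ij.1).obj ij.2)
      (hBobj : ∀ (f : LaxFunctor (I × J) X) (i : I) (j : J),
        ((B.obj f).obj i).obj j = f.obj (i, j)),
      -- the formula for `A` on morphisms of `I × J`
      (∀ (f : LaxFunctor I (LaxFunctor J X)) {i₁ i₂ : I} {j₁ j₂ : J}
          (a : i₁ ⟶ i₂) (b : j₁ ⟶ j₂),
        (A.obj f).map ((a, b) : (i₁, j₁) ⟶ (i₂, j₂)) =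
          eqToHom (hAobj f (i₁, j₁)) ≫ (f.obj i₁).map b ≫ (f.map a).app j₂ ≫
            eqToHom (hAobj f (i₂, j₂)).symm) ∧
      -- the formula for `A` on deformations
      (∀ (f g : LaxFunctor I (LaxFunctor J X)) (d : f ⟶ g) (i : I) (j : J),
        (A.map d).app (i, j) =
          eqToHom (hAobj f (i, j)) ≫ (d.app i).app j ≫ eqToHom (hAobj g (i, j)).symm) ∧
      -- the formulas for `B` on morphisms of `I` and of `J`
      (∀ (f : LaxFunctor (I × J) X) (i : I) {j₁ j₂ : J} (b : j₁ ⟶ j₂),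
        ((B.obj f).obj i).map b =
          eqToHom (hBobj f i j₁) ≫ f.map ((𝟙 i, b) : (i, j₁) ⟶ (i, j₂)) ≫
            eqToHom (hBobj f i j₂).symm) ∧
      (∀ (f : LaxFunctor (I × J) X) {i₁ i₂ : I} (a : i₁ ⟶ i₂) (j : J),
        ((B.obj f).map a).app j =
          eqToHom (hBobj f i₁ j) ≫ f.map ((a, 𝟙 j) : (i₁, j) ⟶ (i₂, j)) ≫
            eqToHom (hBobj f i₂ j).symm) ∧
      -- the formula for `B` on deformations
      (∀ (f g : LaxFunctor (I × J) X) (d : f ⟶ g) (i : I) (j : J),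
        ((B.map d).app i).app j =
          eqToHom (hBobj f i j) ≫ d.app (i, j) ≫ eqToHom (hBobj g i j).symm) ∧
      -- `A` and `B` preserve the pointwise equivalence relations
      (∀ (f g : LaxFunctor I (LaxFunctor J X)) (d₁ d₂ : f ⟶ g),
        CatER.rel d₁ d₂ → CatER.rel (A.map d₁) (A.map d₂)) ∧
      (∀ (f g : LaxFunctor (I × J) X) (d₁ d₂ : f ⟶ g),
        CatER.rel d₁ d₂ → CatER.rel (B.map d₁) (B.map d₂)) ∧
      -- `B ∘ A` is the identity
      A ⋙ B = 𝟭 (LaxFunctor I (LaxFunctor J X)) ∧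
      -- `Θ : A∘B ⇒ id` is a deformation relative to objects, with identity components
      (∃ (hABobj : ∀ (f : LaxFunctor (I × J) X) (ij : I × J),
            (A.obj (B.obj f)).obj ij = f.obj ij)
          (Θ : ∀ f : LaxFunctor (I × J) X, A.obj (B.obj f) ⟶ f),
        (∀ (f : LaxFunctor (I × J) X) (ij : I × J),
          (Θ f).app ij = eqToHom (hABobj f ij)) ∧
        (∀ (f : LaxFunctor (I × J) X) {ij ij' : I × J} (m : ij ⟶ ij'),
          CatER.rel ((A.obj (B.obj f)).map m)
            (eqToHom (hABobj f ij) ≫ f.map m ≫ eqToHom (hABobj f ij').symm)) ∧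
        (∀ (f g : LaxFunctor (I × J) X) (d : f ⟶ g),
          CatER.rel (A.map (B.map d) ≫ Θ g) (Θ f ≫ d))) := by
  refine ⟨funA I J X, funB I J X, fun f ij => rfl, fun f i j => rfl,
    fun f {i₁ i₂} {j₁ j₂} a b => ?_,
    fun f g d i j => ?_,
    fun f i {j₁ j₂} b => ?_,
    fun f {i₁ i₂} a j => ?_,
    fun f g d i j => ?_,
    fun f g d₁ d₂ h ij => h ij.1 ij.2,
    fun f g d₁ d₂ h i j => h (i, j),
    ?_,
    ⟨fun f ij => rfl,
     fun f => ⟨fun ij => 𝟙 _, fun {ij ij'} m => by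
        erw [Category.comp_id, Category.id_comp]; exact ABmap_rel f m⟩,
     fun f ij => by exact (eqToHom_refl'' _).symm,
     fun f ij ij' m => by
       erw [eqToHom_refl'', eqToHom_refl'', Category.id_comp, Category.comp_id]; exact ABmap_rel f m,
     fun f g d ij => by
       show CatER.rel ((d.app ij) ≫ 𝟙 _) (𝟙 _ ≫ d.app ij)
       erw [Category.comp_id, Category.id_comp]; exact CatER.equiv.refl (d.app ij)⟩⟩
  · show (f.obj i₁).map b ≫ (f.map a).app j₂ = _
    simp
    erw [eqToHom_refl'', eqToHom_refl'', Category.id_comp, Category.comp_id]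
    rfl
  · show (d.app i).app j = _
    simp
    erw [eqToHom_refl'', eqToHom_refl'', Category.id_comp, Category.comp_id]
  · show f.map (pmk (𝟙 i) b) = _
    simp [pmk]
    erw [eqToHom_refl'', eqToHom_refl'', Category.id_comp, Category.comp_id]
  · show f.map (pmk a (𝟙 j)) = _
    simp [pmk]
    erw [eqToHom_refl'', eqToHom_refl'', Category.id_comp, Category.comp_id]
  · show d.app (i, j) = _
    erw [eqToHom_refl'', eqToHom_refl'', Category.id_comp, Category.comp_id]
  · refine CategoryTheory.Functor.ext BA_obj (fun f g d => ?_)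
    refine Deformation.ext' fun i => ?_
    refine Deformation.ext' fun j => ?_
    show (d.app i).app j = _
    rw [Deformation.comp_app', Deformation.comp_app', Deformation.eqToHom_app',
      Deformation.eqToHom_app', Deformation.comp_app', Deformation.comp_app',
      Deformation.eqToHom_app', Deformation.eqToHom_app']
    simp
    erw [eqToHom_refl'', eqToHom_refl'', Category.id_comp, Category.comp_id]
end

section
/- Let I and J be small categories and X a small category with equivalence relations. Then there is an isomorphism of categories HOM(I, LAX(J, X)_strict)_strict ≅ LAX(J, HOM(I, X)_strict)_strict, natural in I, J and X, given by swapping arguments: a functor F : I → LAX(J, X)_strict corresponds to the lax functor J → HOM(I, X)_strict sending j to the functor i ↦ F(i)(j). -/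
open CategoryTheory

/-- A strict deformation between lax functors: the naturality squares commute on the
nose. -/
structure StrictDef {I : Type*} [Category I] {X : Type*} [Category X] [CatER X]
    (x y : LaxFunctor I X) where
  app : ∀ i : I, x.obj i ⟶ y.obj i
  natural : ∀ {i j : I} (a : i ⟶ j), x.map a ≫ app j = app i ≫ y.map a

namespace StrictDef

variable {I : Type*} [Category I] {X : Type*} [Category X] [CatER X]

theorem ext' : ∀ {x y : LaxFunctor I X} {f g : StrictDef x y},
    (∀ i, f.app i = g.app i) → f = g
  | _, _, ⟨a, _⟩, ⟨b, _⟩, h => by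
    obtain rfl : a = b := funext h
    rfl

end StrictDef

/-- The category `LAX(I, X)_strict` of lax functors and strict deformations. -/
instance LaxStrictCat (I : Type*) [Category I] (X : Type*) [Category X] [CatER X] :
    Category (LaxFunctor I X) where
  Hom := StrictDef
  id x := ⟨fun i => 𝟙 (x.obj i), fun a => by simp⟩
  comp f g := ⟨fun i => f.app i ≫ g.app i, fun a => by
    rw [← Category.assoc, f.natural, Category.assoc, g.natural, Category.assoc]⟩
  id_comp f := StrictDef.ext' (fun i => Category.id_comp (f.app i))
  comp_id f := StrictDef.ext' (fun i => Category.comp_id (f.app i))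
  assoc f g h := StrictDef.ext' (fun i => Category.assoc _ _ _)

/-- `LAX(I, X)_strict` carries the pointwise equivalence relations. -/
instance LaxStrictCatER (I : Type*) [Category I] (X : Type*) [Category X] [CatER X] :
    CatER (LaxFunctor I X) where
  rel f g := ∀ i, CatER.rel (f.app i) (g.app i)
  equiv :=
    ⟨fun _ _ => CatER.equiv.refl _, fun h i => CatER.equiv.symm (h i),
      fun h₁ h₂ i => CatER.equiv.trans (h₁ i) (h₂ i)⟩
  comp_left := fun {A B C} a {x y} h i => CatER.comp_left _ (h i)
  comp_right := fun {A B C} {x y} b h i => CatER.comp_right _ (h i)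

/-- `HOM(I, X)_strict`, the ordinary functor category, carries the pointwise
equivalence relations. -/
instance FunctorCatER (I : Type*) [Category I] (X : Type*) [Category X] [CatER X] :
    CatER (I ⥤ X) where
  rel f g := ∀ i, CatER.rel (f.app i) (g.app i)
  equiv :=
    ⟨fun _ _ => CatER.equiv.refl _, fun h i => CatER.equiv.symm (h i),
      fun h₁ h₂ i => CatER.equiv.trans (h₁ i) (h₂ i)⟩
  comp_left := fun {A B C} a {x y} h i => CatER.comp_left _ (h i)
  comp_right := fun {A B C} {x y} b h i => CatER.comp_right _ (h i)

section Swap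

variable {I J X : Type} [SmallCategory I] [SmallCategory J] [SmallCategory X] [CatER X]

/-- Swap: `F : I ⥤ LAX(J,X)` to `LAX(J, I ⥤ X)`, object part. -/
def swapObj (F : I ⥤ LaxFunctor J X) : LaxFunctor J (I ⥤ X) where
  obj j :=
    { obj := fun i => (F.obj i).obj j
      map := fun a => (F.map a).app j
      map_id := fun i => by show (F.map (𝟙 i)).app j = _; rw [F.map_id]; rfl
      map_comp := fun a b => by
        show (F.map (a ≫ b)).app j = _
        rw [F.map_comp]; rfl }
  map b :=
    { app := fun i => (F.obj i).map b
      naturality := fun i i' a => ((F.map a).natural b).symm }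
  map_id j := by ext i; exact (F.obj i).map_id j
  map_comp b b' := fun i => (F.obj i).map_comp b b'

/-- Swap functor `Φ`. -/
def swapΦ : (I ⥤ LaxFunctor J X) ⥤ LaxFunctor J (I ⥤ X) where
  obj := swapObj
  map {F G} η :=
    { app := fun j =>
        { app := fun i => (η.app i).app j
          naturality := fun i i' a => congrArg (fun f : StrictDef _ _ => f.app j)
            (η.naturality a) }
      natural := fun b => by ext i; exact (η.app i).natural b }
  map_id F := StrictDef.ext' (fun j => rfl)
  map_comp f g := StrictDef.ext' (fun j => rfl)

/-- Swap: `LAX(J, I ⥤ X)` to `I ⥤ LAX(J,X)`, object part. -/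
def unswapObj (G : LaxFunctor J (I ⥤ X)) : I ⥤ LaxFunctor J X where
  obj i :=
    { obj := fun j => (G.obj j).obj i
      map := fun b => (G.map b).app i
      map_id := fun j => by show (G.map (𝟙 j)).app i = _; rw [G.map_id]; rfl
      map_comp := fun b b' => G.map_comp b b' i }
  map {i i'} a :=
    { app := fun j => (G.obj j).map a
      natural := fun b => ((G.map b).naturality a).symm }
  map_id i := StrictDef.ext' (fun j => (G.obj j).map_id i)
  map_comp a a' := StrictDef.ext' (fun j => (G.obj j).map_comp a a')

/-- Swap functor `Ψ`. -/
def swapΨ : LaxFunctor J (I ⥤ X) ⥤ (I ⥤ LaxFunctor J X) where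
  obj := unswapObj
  map {G G'} η :=
    { app := fun i =>
        { app := fun j => (η.app j).app i
          natural := fun b => congrArg (fun f : NatTrans _ _ => f.app i) (η.natural b) }
      naturality := fun i i' a => StrictDef.ext' (fun j => (η.app j).naturality a) }
  map_id G := rfl
  map_comp f g := rfl

end Swap

/-- For small categories `I`, `J` and a small category with
equivalence relations `X`, there is an isomorphism of categories
`HOM(I, LAX(J, X)_strict)_strict ≅ LAX(J, HOM(I, X)_strict)_strict`, given by swapping
arguments: a functor `F : I → LAX(J, X)_strict` corresponds to the lax functor
`J → HOM(I, X)_strict` sending `j` to the functor `i ↦ F(i)(j)`. -/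
theorem stmt12 (I J : Type) [SmallCategory I] [SmallCategory J]
    (X : Type) [SmallCategory X] [CatER X] :
    ∃ (Φ : (I ⥤ LaxFunctor J X) ⥤ LaxFunctor J (I ⥤ X))
      (Ψ : LaxFunctor J (I ⥤ X) ⥤ (I ⥤ LaxFunctor J X))
      (hobj : ∀ (F : I ⥤ LaxFunctor J X) (j : J) (i : I),
        ((Φ.obj F).obj j).obj i = (F.obj i).obj j),
      Φ ⋙ Ψ = 𝟭 (I ⥤ LaxFunctor J X) ∧
      Ψ ⋙ Φ = 𝟭 (LaxFunctor J (I ⥤ X)) ∧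
      -- `Φ(F)(j)` acts on morphisms of `I` by `a ↦ F(a)(j)`
      (∀ (F : I ⥤ LaxFunctor J X) (j : J) {i i' : I} (a : i ⟶ i'),
        ((Φ.obj F).obj j).map a =
          eqToHom (hobj F j i) ≫ (F.map a).app j ≫ eqToHom (hobj F j i').symm) ∧
      -- `Φ(F)` acts on morphisms of `J` by `(b : j ⟶ j') ↦ (i ↦ F(i)(b))`
      (∀ (F : I ⥤ LaxFunctor J X) {j j' : J} (b : j ⟶ j') (i : I),
        ((Φ.obj F).map b).app i =
          eqToHom (hobj F j i) ≫ (F.obj i).map b ≫ eqToHom (hobj F j' i).symm) ∧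
      -- `Φ` acts on morphisms by swapping indices as well
      (∀ (F G : I ⥤ LaxFunctor J X) (η : F ⟶ G) (j : J) (i : I),
        ((Φ.map η).app j).app i =
          eqToHom (hobj F j i) ≫ (η.app i).app j ≫ eqToHom (hobj G j i).symm) ∧
      -- `Φ` and `Ψ` preserve the pointwise equivalence relations
      (∀ (F G : I ⥤ LaxFunctor J X) (η θ : F ⟶ G),
        (∀ i, CatER.rel (η.app i) (θ.app i)) → CatER.rel (Φ.map η) (Φ.map θ)) ∧
      (∀ (F G : LaxFunctor J (I ⥤ X)) (η θ : F ⟶ G),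
        CatER.rel η θ → ∀ i : I, CatER.rel ((Ψ.map η).app i) ((Ψ.map θ).app i)) := by
  refine ⟨swapΦ, swapΨ, fun F j i => rfl, ?_, ?_, fun F j i i' a => ?_, fun F j j' b i => ?_,
    fun F G η j i => ?_, fun F G η θ h j i => h i j, fun F G η θ h i j => h j i⟩
  · rfl
  · rfl
  · show (F.map a).app j = _; exact (by simp : (F.map a).app j = 𝟙 _ ≫ (F.map a).app j ≫ 𝟙 _)
  · show (F.obj i).map b = _; exact (by simp : (F.obj i).map b = 𝟙 _ ≫ (F.obj i).map b ≫ 𝟙 _)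
  · show (η.app i).app j = _; exact (by simp : (η.app i).app j = 𝟙 _ ≫ (η.app i).app j ≫ 𝟙 _)
end

section
/- Let X be a small category with equivalence relations and n a natural number. Let M_n(X) be the category whose objects are lax functors Y : [n] × [n] → X such that (i) Y(i, s) = Y(i, t) and Y(id_i, s ≤ t) = id for all i and all s ≤ t, and (ii) for all 0 ≤ s ≤ n−1 and all j, the morphism Y_{s,j} := Y(s ≤ s+1, id_j) is an isomorphism; and whose morphisms are deformations f with f(i, s) = f(i, t) for all i, s ≤ t, and such that f(s+1, j)∘Y_{s,j} = Y'_{s,j}∘f(s, j) for all s, j. Let M'_n(X) be the full subcategory of M_n(X) on those Y with Y(i, j) = Y(s, t) for all 0 ≤ i, j, s, t ≤ n. Then the inclusion M'_n(X) ↪ M_n(X) is essentially surjective: every object Y of M_n(X) is isomorphic in M_n(X) to the object Z of M'_n(X) defined by Z(i, j) = Y(0, 0), with structure morphisms given by conjugating those of Y by the composites Y_{i−1,0}∘Y_{i−2,0}∘⋯∘Y_{0,0}, via the isomorphism f : Z → Y with f(i, j) = Y_{i−1,0}∘Y_{i−2,0}∘⋯∘Y_{0,0}. -/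
open CategoryTheory

/-- The square category `[n] × [n]`, where `[n] = {0 < 1 < ⋯ < n}`. -/
abbrev Sq (n : ℕ) : Type := Fin (n + 1) × Fin (n + 1)

/-- The generating step morphism `s ⟶ s+1` in `[n]`. -/
def step {n : ℕ} (s : ℕ) (hs : s + 1 < n + 1) :
    (⟨s, Nat.lt_of_succ_lt hs⟩ : Fin (n + 1)) ⟶ (⟨s + 1, hs⟩ : Fin (n + 1)) :=
  homOfLE (by simp [Fin.mk_le_mk])

/-- Membership in the category `M_n(X)`: a lax functor `Y : [n] × [n] → X` such that
(i) `Y(i, s) = Y(i, t)` with `Y(id_i, s ≤ t) = id` for all `i` and `s ≤ t`, and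
(ii) all the morphisms `Y_{s,j} = Y(s ≤ s+1, id_j)` are isomorphisms. -/
structure MemM {n : ℕ} {X : Type} [SmallCategory X] [CatER X]
    (Y : LaxFunctor (Sq n) X) : Prop where
  const : ∀ i s t : Fin (n + 1), Y.obj (i, s) = Y.obj (i, t)
  idmap : ∀ (i : Fin (n + 1)) {s t : Fin (n + 1)} (h : s ≤ t),
    Y.map ((𝟙 i, homOfLE h) : ((i, s) : Sq n) ⟶ (i, t)) = eqToHom (const i s t)
  iso : ∀ (s : ℕ) (hs : s + 1 < n + 1) (j : Fin (n + 1)),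
    IsIso (Y.map ((step s hs, 𝟙 j) :
      ((⟨s, Nat.lt_of_succ_lt hs⟩, j) : Sq n) ⟶ (⟨s + 1, hs⟩, j)))

/-- Membership in `M_n(X)` for a deformation `f` between objects of `M_n(X)`:
`f(i, s) = f(i, t)` for all `s ≤ t`, and `f` commutes strictly with the structure
isomorphisms `Y_{s,j}`. -/
structure MemMHom {n : ℕ} {X : Type} [SmallCategory X] [CatER X]
    {Z Y : LaxFunctor (Sq n) X} (hZ : MemM Z) (hY : MemM Y)
    (f : Deformation Z Y) : Prop where
  const : ∀ i s t : Fin (n + 1),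
    f.app (i, s) = eqToHom (hZ.const i s t) ≫ f.app (i, t) ≫ eqToHom (hY.const i s t).symm
  strict : ∀ (s : ℕ) (hs : s + 1 < n + 1) (j : Fin (n + 1)),
    Z.map ((step s hs, 𝟙 j) :
        ((⟨s, Nat.lt_of_succ_lt hs⟩, j) : Sq n) ⟶ (⟨s + 1, hs⟩, j)) ≫
      f.app (⟨s + 1, hs⟩, j) =
    f.app (⟨s, Nat.lt_of_succ_lt hs⟩, j) ≫
      Y.map ((step s hs, 𝟙 j) :
        ((⟨s, Nat.lt_of_succ_lt hs⟩, j) : Sq n) ⟶ (⟨s + 1, hs⟩, j))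

/-- The composite `Y_{m-1,0} ∘ Y_{m-2,0} ∘ ⋯ ∘ Y_{0,0} : Y(0,0) ⟶ Y(m,0)`. -/
def chain {n : ℕ} {X : Type} [SmallCategory X] [CatER X] (Y : LaxFunctor (Sq n) X) :
    ∀ (m : ℕ) (hm : m < n + 1),
      (Y.obj (⟨0, Nat.succ_pos n⟩, ⟨0, Nat.succ_pos n⟩) ⟶ Y.obj (⟨m, hm⟩, ⟨0, Nat.succ_pos n⟩))
  | 0, _ => 𝟙 _
  | m + 1, h =>
    chain Y m (Nat.lt_of_succ_lt h) ≫
      Y.map ((step m h, 𝟙 (⟨0, Nat.succ_pos n⟩ : Fin (n + 1))) :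
        ((⟨m, Nat.lt_of_succ_lt h⟩, ⟨0, Nat.succ_pos n⟩) : Sq n) ⟶
          (⟨m + 1, h⟩, ⟨0, Nat.succ_pos n⟩))

/-- **Statement 15.**  The inclusion `M'_n(X) ↪ M_n(X)` is essentially surjective:
every object `Y` of `M_n(X)` is isomorphic, in `M_n(X)`, to the object `Z` of `M'_n(X)`
with constant value `Y(0,0)`, whose structure morphisms are the conjugates of those of
`Y` by the composites `Y_{i-1,0}∘⋯∘Y_{0,0}`, via the isomorphism `f : Z ⟶ Y` with
`f(i, j) = Y_{i-1,0}∘⋯∘Y_{0,0}`. -/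
theorem stmt15 (n : ℕ) (X : Type) [SmallCategory X] [CatER X]
    (Y : LaxFunctor (Sq n) X) (hY : MemM Y) :
    ∃ (Z : LaxFunctor (Sq n) X) (hZ : MemM Z)
      (hZobj : ∀ ij : Sq n, Z.obj ij = Y.obj (⟨0, Nat.succ_pos n⟩, ⟨0, Nat.succ_pos n⟩))
      (f : Deformation Z Y) (g : Deformation Y Z),
      -- `Z` lies in `M'_n(X)`:
      (∀ ij ij' : Sq n, Z.obj ij = Z.obj ij') ∧
      -- `f` and `g` are mutually inverse morphisms of `M_n(X)`:
      MemMHom hZ hY f ∧ MemMHom hY hZ g ∧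
      (∀ ij : Sq n, f.app ij ≫ g.app ij = 𝟙 (Z.obj ij)) ∧
      (∀ ij : Sq n, g.app ij ≫ f.app ij = 𝟙 (Y.obj ij)) ∧
      -- the components of `f` are the prescribed composites:
      (∀ i j : Fin (n + 1),
        f.app (i, j) =
          eqToHom (hZobj (i, j)) ≫ chain Y i.1 i.2 ≫
            eqToHom (hY.const i ⟨0, Nat.succ_pos n⟩ j)) ∧
      -- the structure morphisms of `Z` are the conjugates of those of `Y` by `f`:
      (∀ (ij ij' : Sq n) (m : ij ⟶ ij'), Z.map m ≫ f.app ij' = f.app ij ≫ Y.map m) := by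
  have hrefl : ∀ {A B : X} (u : A ⟶ B), CatER.rel u u := fun u =>
    CatER.equiv.refl u
  have hchain : ∀ (m : ℕ) (hm : m < n + 1), IsIso (chain Y m hm) := by
    intro m
    induction m with
    | zero => intro hm; rw [chain]; infer_instance
    | succ m ih =>
      intro hm
      rw [chain]
      have h1 := ih (Nat.lt_of_succ_lt hm)
      have h2 := hY.iso m hm ⟨0, Nat.succ_pos n⟩
      exact IsIso.comp_isIso
  let o0 : Sq n := (⟨0, Nat.succ_pos n⟩, ⟨0, Nat.succ_pos n⟩)
  let φ : ∀ ij : Sq n, (Y.obj o0 ⟶ Y.obj ij) := fun ij =>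
    chain Y ij.1.1 ij.1.2 ≫ eqToHom (hY.const ij.1 ⟨0, Nat.succ_pos n⟩ ij.2)
  haveI hφ : ∀ ij : Sq n, IsIso (φ ij) := by
    intro ij
    have := hchain ij.1.1 ij.1.2
    exact IsIso.comp_isIso
  have hφconst : ∀ (i : Fin (n + 1)) (s t : Fin (n + 1)),
      φ (i, s) ≫ eqToHom (hY.const i s t) = φ (i, t) := by
    intro i s t
    simp only [φ, Category.assoc, eqToHom_trans]
  let Z : LaxFunctor (Sq n) X :=
    { obj := fun _ => Y.obj o0
      map := fun {ij ij'} m => φ ij ≫ Y.map m ≫ inv (φ ij')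
      map_id := by
        intro ij
        simp [Y.map_id]
      map_comp := by
        intro i j k a b
        have h1 : (φ i ≫ Y.map a ≫ inv (φ j)) ≫ φ j ≫ Y.map b ≫ inv (φ k)
            = φ i ≫ (Y.map a ≫ Y.map b) ≫ inv (φ k) := by
          simp
        rw [h1]
        exact CatER.comp_left (φ i)
          (CatER.comp_right (inv (φ k)) (Y.map_comp a b)) }
  have hZmap : ∀ {ij ij' : Sq n} (m : ij ⟶ ij'),
      Z.map m = φ ij ≫ Y.map m ≫ inv (φ ij') := fun _ => rfl
  have hconj : ∀ (ij ij' : Sq n) (m : ij ⟶ ij'),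
      Z.map m ≫ φ ij' = φ ij ≫ Y.map m := by
    intro ij ij' m
    rw [hZmap]
    simp
  have hZ : MemM Z := by
    refine ⟨fun _ _ _ => rfl, ?_, ?_⟩
    · intro i s t h
      rw [hZmap, hY.idmap i h]
      have := hφconst i s t
      rw [← Category.assoc, this]
      simp
      rfl
    · intro s hs j
      rw [hZmap]
      have := hY.iso s hs j
      infer_instance
  let f : Deformation Z Y :=
    { app := φ
      natural := by
        intro i j a
        rw [hconj]
        exact hrefl _ }
  let g : Deformation Y Z :=
    { app := fun ij => inv (φ ij)
      natural := by
        intro i j a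
        rw [hZmap]
        simp only [IsIso.inv_hom_id_assoc]
        exact hrefl _ }
  refine ⟨Z, hZ, fun _ => rfl, f, g, fun _ _ => rfl, ?_, ?_, ?_, ?_, ?_, ?_⟩
  · refine ⟨?_, ?_⟩
    · intro i s t
      show φ (i, s) = _ ≫ φ (i, t) ≫ _
      rw [← hφconst i s t]
      simp
      exact (Category.id_comp _).symm
    · intro s hs j
      exact hconj _ _ _
  · refine ⟨?_, ?_⟩
    · intro i s t
      show inv (φ (i, s)) = _ ≫ inv (φ (i, t)) ≫ _
      have h : inv (φ (i, t)) = eqToHom (hY.const i s t).symm ≫ inv (φ (i, s)) := by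
        apply IsIso.inv_eq_of_hom_inv_id
        rw [← hφconst i s t]
        simp
      rw [h]
      simp
      rfl
    · intro s hs j
      show Y.map _ ≫ inv (φ _) = inv (φ _) ≫ Z.map _
      rw [hZmap]
      simp
  · intro ij
    exact IsIso.hom_inv_id (φ ij)
  · intro ij
    exact IsIso.inv_hom_id (φ ij)
  · intro i j
    show φ (i, j) = _
    rw [eqToHom_refl, Category.id_comp]
  · exact hconj
end
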